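/- arXiv:2005.10599 — 2 statements merged into one kernel-verified Lean document; each statement's English description precedes it below -/
import Mathlib

section
/- Fix r > 0, ρ > 0, λ₁, λ₂ ∈ ℝ and α ∈ ℝ, and set C̄ = r (λ₁ − λ₂) sin(2α) / (2 ρ²). Then there exist p₀ > 1 and K > 0 such that for every p ≥ p₀ the function f_p attains a global maximum on ℝ, and every point θ_p ∈ (−π/2, π/2] at which f_p attains its global maximum satisfies |θ_p − C̄/p| ≤ K/p². (Asymptotics of the optimal control for the p-Hamiltonian at non-characteristic points, diagonal Hessian.) -/
open Real Set

lemma aux_sin_cube (y : ℝ) (hy : |y| ≤ 1) : |Real.sin y - y| ≤ |y| ^ 3 / 4 := by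
  rcases lt_trichotomy y 0 with h | h | h
  · have h1 : 0 < -y := by linarith
    have h2 : -y ≤ 1 := by rw [abs_of_neg h] at hy; linarith
    have := Real.sin_gt_sub_cube h1
    have := Real.sin_lt h1
    rw [Real.sin_neg] at *
    rw [abs_of_neg h]
    rw [abs_le]
    constructor <;> nlinarith
  · simp [h]
  · have h2 : y ≤ 1 := by rwa [abs_of_pos h] at hy
    have := Real.sin_gt_sub_cube h
    have := Real.sin_lt h
    rw [abs_of_pos h, abs_le]
    constructor <;> nlinarith

lemma aux_cos_quad (y : ℝ) : |Real.cos y - 1| ≤ y ^ 2 / 2 := by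
  have h1 := Real.one_sub_sq_div_two_le_cos (x := y)
  have h2 := Real.cos_le_one y
  rw [abs_le]; constructor <;> linarith

lemma aux_cauchy (u v c s : ℝ) (h : c ^ 2 + s ^ 2 = 1) :
    u * c + v * s ≤ Real.sqrt (u ^ 2 + v ^ 2) := by
  have hR : Real.sqrt (u ^ 2 + v ^ 2) ^ 2 = u ^ 2 + v ^ 2 := Real.sq_sqrt (by positivity)
  nlinarith [Real.sqrt_nonneg (u ^ 2 + v ^ 2), sq_nonneg (u * s - v * c),
    sq_nonneg (u * c + v * s - Real.sqrt (u ^ 2 + v ^ 2))]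

lemma aux_jordan (x : ℝ) (hx : |x| ≤ π / 2) : |x| ≤ π / 2 * |Real.sin x| := by
  have h0 : 2 / π * |x| ≤ Real.sin |x| := Real.mul_le_sin (abs_nonneg x) hx
  have hs : Real.sin |x| = |Real.sin x| := by
    rcases le_or_gt 0 x with h | h
    · rw [abs_of_nonneg h, abs_of_nonneg (Real.sin_nonneg_of_nonneg_of_le_pi h
        (by rw [abs_of_nonneg h] at hx; nlinarith [Real.pi_pos]))]
    · have : Real.sin x ≤ 0 := Real.sin_nonpos_of_nonpos_of_neg_pi_le h.le
        (by rw [abs_of_neg h] at hx; nlinarith [Real.pi_pos])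
      rw [abs_of_neg h, Real.sin_neg, abs_of_nonpos this]
  rw [hs] at h0
  have hπ := Real.pi_pos
  calc |x| = π / 2 * (2 / π * |x|) := by field_simp
    _ ≤ π / 2 * |Real.sin x| := by
        apply mul_le_mul_of_nonneg_left h0 (by positivity)

lemma aux_rewrite (l₁ l₂ α a p θ : ℝ) :
    -(p - 1) * a * Real.sin θ ^ 2 + l₁ * Real.sin (θ + α) ^ 2 + l₂ * Real.cos (θ + α) ^ 2
    = (-(p - 1) * a + l₁ + l₂) / 2
      + (((p - 1) * a + (l₂ - l₁) * Real.cos (2 * α)) * Real.cos (2 * θ)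
         + ((l₁ - l₂) * Real.sin (2 * α)) * Real.sin (2 * θ)) / 2 := by
  rw [Real.sin_sq_eq_half_sub θ, Real.sin_sq_eq_half_sub (θ + α), Real.cos_sq (θ + α),
    show (2 : ℝ) * (θ + α) = 2 * θ + 2 * α by ring, Real.cos_add]
  ring

set_option maxHeartbeats 2000000 in
/-- Asymptotics of the optimal control for the `p`-Hamiltonian at
non-characteristic points (diagonal Hessian): with
`f_p θ = −(p−1) r⁻¹ ρ² sin²θ + λ₁ sin²(θ+α) + λ₂ cos²(θ+α)` and
`C̄ = r (λ₁ − λ₂) sin (2α) / (2 ρ²)`, there are `p₀ > 1` and `K > 0` such that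
for all `p ≥ p₀` the function `f_p` attains a global maximum on `ℝ`, and every
global maximizer `θ_p ∈ (−π/2, π/2]` satisfies `|θ_p − C̄/p| ≤ K/p²`. -/
theorem optimal_angle_asymptotics_diagonal (r ρ lam₁ lam₂ α : ℝ)
    (hr : 0 < r) (hρ : 0 < ρ)
    (f : ℝ → ℝ → ℝ)
    (hf : ∀ p θ, f p θ = -(p - 1) * r⁻¹ * ρ ^ 2 * sin θ ^ 2
        + lam₁ * sin (θ + α) ^ 2 + lam₂ * cos (θ + α) ^ 2)
    (C : ℝ) (hC : C = r * (lam₁ - lam₂) * sin (2 * α) / (2 * ρ ^ 2)) :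
    ∃ p₀ > (1 : ℝ), ∃ K > (0 : ℝ), ∀ p ≥ p₀,
      (∃ θ : ℝ, IsMaxOn (f p) univ θ) ∧
      ∀ θₚ ∈ Ioc (-(π / 2)) (π / 2),
        IsMaxOn (f p) univ θₚ → |θₚ - C / p| ≤ K / p ^ 2 := by
  obtain ⟨a, ha_def, ha⟩ : ∃ a : ℝ, a = r⁻¹ * ρ ^ 2 ∧ 0 < a := ⟨_, rfl, by positivity⟩
  obtain ⟨v, hv_def⟩ : ∃ x : ℝ, x = (lam₁ - lam₂) * Real.sin (2 * α) := ⟨_, rfl⟩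
  obtain ⟨w, hw_def⟩ : ∃ x : ℝ, x = (lam₂ - lam₁) * Real.cos (2 * α) := ⟨_, rfl⟩
  obtain ⟨N, hN_def⟩ : ∃ x : ℝ,
    x = |v| * (a + |w|) / a + |v| ^ 2 / (2 * a) + (a + |w|) * |v| ^ 2 / (32 * a ^ 2) := ⟨_, rfl⟩
  have hav := abs_nonneg v
  have haw := abs_nonneg w
  have hN0 : 0 ≤ N := by
    rw [hN_def]
    have h3 : 0 ≤ |v| * (a + |w|) / a := div_nonneg (mul_nonneg hav (by linarith)) ha.le
    have h4 : 0 ≤ |v| ^ 2 / (2 * a) := div_nonneg (sq_nonneg _) (by linarith)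
    have h5 : 0 ≤ (a + |w|) * |v| ^ 2 / (32 * a ^ 2) :=
      div_nonneg (mul_nonneg (by linarith) (sq_nonneg _)) (by positivity)
    linarith
  obtain ⟨p₀, hp₀_def⟩ : ∃ x : ℝ, x = 2 + (2 * |w| + 8 * |v|) / a := ⟨_, rfl⟩
  obtain ⟨K, hK_def⟩ : ∃ x : ℝ, x = π * N / (2 * a) + 1 := ⟨_, rfl⟩
  have hπ := Real.pi_pos
  have hdiv0 : 0 ≤ (2 * |w| + 8 * |v|) / a := div_nonneg (by linarith) ha.le
  have hK0 : 0 < K := by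
    rw [hK_def]
    have : 0 ≤ π * N / (2 * a) := div_nonneg (mul_nonneg hπ.le hN0) (by linarith)
    linarith
  refine ⟨p₀, by rw [hp₀_def]; linarith, K, hK0, ?_⟩
  intro p hp
  rw [ge_iff_le, hp₀_def] at hp
  -- basic facts about p
  have hp2 : (2 : ℝ) ≤ p := by linarith
  have hp0 : (0 : ℝ) < p := by linarith
  have h1 : a * 2 + (2 * |w| + 8 * |v|) ≤ a * p := by
    have := mul_le_mul_of_nonneg_left hp ha.le
    rwa [mul_add, mul_div_cancel₀ _ ha.ne'] at this
  have hap : 0 < a * p := mul_pos ha hp0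
  obtain ⟨u, hu_def⟩ : ∃ x : ℝ, x = (p - 1) * a + w := ⟨_, rfl⟩
  have hu : a * p / 2 ≤ u := by
    rw [hu_def]
    have := neg_abs_le w
    linarith
  have hu0 : 0 < u := lt_of_lt_of_le (by linarith) hu
  have hv8 : |v| ≤ a * p / 8 := by linarith
  -- the key rewriting of f
  have hkey : ∀ q θ : ℝ, f q θ
      = (-(q - 1) * a + lam₁ + lam₂) / 2
        + (((q - 1) * a + w) * Real.cos (2 * θ) + v * Real.sin (2 * θ)) / 2 := by
    intro q θ
    rw [hf, show -(q - 1) * r⁻¹ * ρ ^ 2 = -(q - 1) * a by rw [ha_def]; ring,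
      hv_def, hw_def]
    exact aux_rewrite lam₁ lam₂ α a q θ
  obtain ⟨R, hR_def⟩ : ∃ x : ℝ, x = Real.sqrt (u ^ 2 + v ^ 2) := ⟨_, rfl⟩
  have hR2 : R ^ 2 = u ^ 2 + v ^ 2 := by rw [hR_def]; exact Real.sq_sqrt (by positivity)
  have hRnn : 0 ≤ R := by rw [hR_def]; exact Real.sqrt_nonneg _
  have hRu : u ≤ R := by
    rw [hR_def]
    calc u = Real.sqrt (u ^ 2) := (Real.sqrt_sq hu0.le).symm
      _ ≤ Real.sqrt (u ^ 2 + v ^ 2) := Real.sqrt_le_sqrt (by linarith [sq_nonneg v])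
  have hR0 : 0 < R := lt_of_lt_of_le hu0 hRu
  -- the maximizer
  obtain ⟨θs, hθs_def⟩ : ∃ x : ℝ, x = Real.arctan (v / u) / 2 := ⟨_, rfl⟩
  have h2t : 2 * θs = Real.arctan (v / u) := by rw [hθs_def]; ring
  have hsq : Real.sqrt (1 + (v / u) ^ 2) = R / u := by
    rw [show (1 : ℝ) + (v / u) ^ 2 = (u ^ 2 + v ^ 2) / u ^ 2 by field_simp,
      Real.sqrt_div (by positivity), Real.sqrt_sq hu0.le, hR_def]
  have hcθs : Real.cos (2 * θs) = u / R := by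
    rw [h2t, Real.cos_arctan, hsq, one_div_div]
  have hsθs : Real.sin (2 * θs) = v / R := by
    rw [h2t, Real.sin_arctan, hsq]
    field_simp
  have hmaxval : u * Real.cos (2 * θs) + v * Real.sin (2 * θs) = R := by
    rw [hcθs, hsθs, eq_comm, show u * (u / R) + v * (v / R) = (u * u + v * v) / R by ring,
      eq_div_iff hR0.ne']
    linear_combination hR2
  have hmaxθs : IsMaxOn (f p) univ θs := by
    rw [isMaxOn_iff]
    intro θ _
    rw [hkey, hkey, ← hu_def, hmaxval]
    have := aux_cauchy u v (Real.cos (2 * θ)) (Real.sin (2 * θ))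
      (by linarith [Real.sin_sq_add_cos_sq (2 * θ)])
    rw [← hR_def] at this
    linarith
  refine ⟨⟨θs, hmaxθs⟩, ?_⟩
  -- Part 2: every maximizer in the interval
  intro θₚ hθ hmaxθ
  obtain ⟨c, hc_def⟩ : ∃ x : ℝ, x = Real.cos (2 * θₚ) := ⟨_, rfl⟩
  obtain ⟨s, hs_def⟩ : ∃ x : ℝ, x = Real.sin (2 * θₚ) := ⟨_, rfl⟩
  have h1cs : c ^ 2 + s ^ 2 = 1 := by
    rw [hc_def, hs_def]; linarith [Real.sin_sq_add_cos_sq (2 * θₚ)]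
  have hle : u * c + v * s ≤ R := by
    have := aux_cauchy u v c s h1cs; rwa [← hR_def] at this
  have hge : R ≤ u * c + v * s := by
    have h := isMaxOn_iff.mp hmaxθ θs (mem_univ θs)
    rw [hkey, hkey, ← hu_def, hmaxval, ← hc_def, ← hs_def] at h
    linarith
  have hE : u * c + v * s = R := le_antisymm hle hge
  have horto : u * s - v * c = 0 := by
    have h0 : (u * s - v * c) ^ 2 = 0 := by
      linear_combination (u ^ 2 + v ^ 2) * h1cs - (u * c + v * s + R) * hE - hR2
    exact sq_eq_zero_iff.mp h0
  have hcR : c = u / R := by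
    rw [eq_div_iff hR0.ne']
    have h2 : R * (c * R - u) = 0 := by linear_combination c * hR2 - v * horto + u * hE
    have := (mul_eq_zero.mp h2).resolve_left hR0.ne'
    linarith
  have hsR : s = v / R := by
    rw [eq_div_iff hR0.ne']
    have h2 : R * (s * R - v) = 0 := by linear_combination s * hR2 + u * horto + v * hE
    have := (mul_eq_zero.mp h2).resolve_left hR0.ne'
    linarith
  have hcpos : 0 < c := by rw [hcR]; exact div_pos hu0 hR0
  have hsabs : |s| ≤ 2 * |v| / (a * p) := by
    rw [hsR, abs_div, abs_of_pos hR0]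
    calc |v| / R ≤ |v| / (a * p / 2) := by
          apply div_le_div_of_nonneg_left hav (by linarith) (le_trans hu hRu)
      _ = 2 * |v| / (a * p) := by rw [div_div_eq_mul_div, mul_comm]
  -- |2θₚ| is small
  have habs2θ : |2 * θₚ| ≤ π := by
    rw [abs_le]
    constructor
    · linarith [hθ.1]
    · linarith [hθ.2]
  have hlt : |2 * θₚ| < π / 2 := by
    by_contra h
    push_neg at h
    have hcle : Real.cos |2 * θₚ| ≤ 0 :=
      Real.cos_nonpos_of_pi_div_two_le_of_le h (by linarith)
    rw [Real.cos_abs, ← hc_def] at hcle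
    linarith
  have hjor : |2 * θₚ| ≤ π / 2 * |s| := by
    have := aux_jordan (2 * θₚ) hlt.le
    rwa [← hs_def] at this
  have h2θsmall : |2 * θₚ| ≤ π / 8 := by
    have hs14 : |s| ≤ 1 / 4 := by
      calc |s| ≤ 2 * |v| / (a * p) := hsabs
        _ ≤ 2 * (a * p / 8) / (a * p) := by gcongr
        _ = 1 / 4 := by rw [div_eq_iff hap.ne']; ring
    have : π / 2 * |s| ≤ π / 2 * (1 / 4) := by gcongr
    linarith
  -- the target point
  obtain ⟨y, hy_def⟩ : ∃ x : ℝ, x = v / (a * p) := ⟨_, rfl⟩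
  have hyv : |y| = |v| / (a * p) := by rw [hy_def, abs_div, abs_of_pos hap]
  have hyabs : |y| ≤ 1 / 8 := by
    rw [hyv, div_le_iff₀ hap]
    linarith
  have hCp : C / p = y / 2 := by
    rw [hC, hy_def, ha_def, hv_def]
    field_simp
  have hΔabs : |2 * θₚ - y| ≤ π / 2 := by
    have h3 := Real.pi_gt_three
    calc |2 * θₚ - y| ≤ |2 * θₚ| + |y| := abs_sub _ _
      _ ≤ π / 8 + 1 / 8 := by gcongr
      _ ≤ π / 2 := by linarith
  have hsinΔ : Real.sin (2 * θₚ - y) = (v * Real.cos y - u * Real.sin y) / R := by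
    rw [Real.sin_sub, ← hs_def, ← hc_def, hsR, hcR]
    field_simp
  -- numerator bound
  have hb1 : |v - u * y| ≤ |v| * (a + |w|) / a / p := by
    have hval : v - u * y = v * (a - w) / (a * p) := by
      rw [hy_def, hu_def]; field_simp; ring
    rw [hval, abs_div, abs_mul, abs_of_pos hap]
    calc |v| * |a - w| / (a * p) ≤ |v| * (a + |w|) / (a * p) := by
          have h6 : |a - w| ≤ a + |w| := by
            calc |a - w| ≤ |a| + |w| := abs_sub _ _
              _ = a + |w| := by rw [abs_of_pos ha]
          gcongr
      _ = |v| * (a + |w|) / a / p := by ring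
  have hb2 : |v| * |Real.cos y - 1| ≤ |v| ^ 2 / (2 * a) / p := by
    have h2 := aux_cos_quad y
    calc |v| * |Real.cos y - 1| ≤ |v| * (y ^ 2 / 2) := by gcongr
      _ = |v| * (|y| * |y|) / 2 := by rw [pow_two, ← abs_mul_abs_self y]; ring
      _ ≤ |v| * (1 * (|v| / (a * p))) / 2 := by
          have hgc : |y| ≤ 1 := le_trans hyabs (by norm_num)
          gcongr <;> first | exact hgc | rw [hyv] | exact Or.inl trivial
      _ = |v| * |v| / (2 * a) / p := by ring
      _ = |v| ^ 2 / (2 * a) / p := by rw [← pow_two |v|]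
  have hb3 : u * |Real.sin y - y| ≤ (a + |w|) * |v| ^ 2 / (32 * a ^ 2) / p := by
    have h3 := aux_sin_cube y (le_trans hyabs (by norm_num))
    have huP : u ≤ p * (a + |w|) := by
      have h4 := le_abs_self w
      have h5 : 0 ≤ (p - 1) * |w| := mul_nonneg (by linarith) haw
      rw [hu_def]
      linarith
    have hyabs' : |v| / (a * p) ≤ 1 / 8 := hyv ▸ hyabs
    have m1 : u * |y| ≤ (a + |w|) * |v| / a := by
      rw [hyv, show u * (|v| / (a * p)) = u * |v| / (a * p) from by ring,
        show (a + |w|) * |v| / a = p * (a + |w|) * |v| / (a * p) from by field_simp]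
      exact (div_le_div_iff_of_pos_right hap).mpr (mul_le_mul_of_nonneg_right huP hav)
    have m2 : |y| * |y| ≤ 1 / 8 * (|v| / (a * p)) := by
      rw [hyv]
      exact mul_le_mul hyabs' le_rfl (div_nonneg hav hap.le) (by norm_num)
    have m3 : u * (|y| ^ 3 / 4) ≤ ((a + |w|) * |v| / a) * (1 / 8 * (|v| / (a * p))) / 4 := by
      have e4 : u * (|y| ^ 3 / 4) = (u * |y|) * (|y| * |y|) / 4 := by ring
      rw [e4]
      have m4 := mul_le_mul m1 m2 (mul_nonneg (abs_nonneg y) (abs_nonneg y))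
        (div_nonneg (mul_nonneg (by linarith) hav) ha.le)
      linarith
    calc u * |Real.sin y - y| ≤ u * (|y| ^ 3 / 4) := mul_le_mul_of_nonneg_left h3 hu0.le
      _ ≤ ((a + |w|) * |v| / a) * (1 / 8 * (|v| / (a * p))) / 4 := m3
      _ = (a + |w|) * (|v| * |v|) / (32 * a ^ 2) / p := by ring
      _ = (a + |w|) * |v| ^ 2 / (32 * a ^ 2) / p := by rw [← pow_two |v|]
  have hnum : |v * Real.cos y - u * Real.sin y| ≤ N / p := by
    have e : v * Real.cos y - u * Real.sin y
        = (v * (Real.cos y - 1) + (v - u * y)) - u * (Real.sin y - y) := by ring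
    calc |v * Real.cos y - u * Real.sin y|
        ≤ |v * (Real.cos y - 1) + (v - u * y)| + |u * (Real.sin y - y)| := by
          rw [e]; exact abs_sub _ _
      _ ≤ |v * (Real.cos y - 1)| + |v - u * y| + |u * (Real.sin y - y)| := by
          have := abs_add_le (v * (Real.cos y - 1)) (v - u * y)
          linarith
      _ ≤ |v| * (a + |w|) / a / p + |v| ^ 2 / (2 * a) / p
          + (a + |w|) * |v| ^ 2 / (32 * a ^ 2) / p := by
          rw [abs_mul, abs_mul, abs_of_pos hu0]
          linarith [hb1, hb2, hb3]
      _ = N / p := by rw [hN_def]; ring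
  have hsinb : |Real.sin (2 * θₚ - y)| ≤ 2 * N / (a * p ^ 2) := by
    rw [hsinΔ, abs_div, abs_of_pos hR0]
    calc |v * Real.cos y - u * Real.sin y| / R ≤ (N / p) / (a * p / 2) := by
          exact div_le_div₀ (by positivity) hnum (by linarith) (le_trans hu hRu)
      _ = 2 * N / (a * p ^ 2) := by field_simp
  have hfinal : |2 * θₚ - y| ≤ π * N / (a * p ^ 2) := by
    calc |2 * θₚ - y| ≤ π / 2 * |Real.sin (2 * θₚ - y)| := aux_jordan _ hΔabs
      _ ≤ π / 2 * (2 * N / (a * p ^ 2)) := by gcongr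
      _ = π * N / (a * p ^ 2) := by ring
  have heq : θₚ - C / p = (2 * θₚ - y) / 2 := by rw [hCp]; ring
  rw [heq, abs_div, abs_of_pos (by norm_num : (0:ℝ) < 2), hK_def]
  calc |2 * θₚ - y| / 2 ≤ π * N / (a * p ^ 2) / 2 := by linarith
    _ = (π * N / (2 * a)) / p ^ 2 := by ring
    _ ≤ (π * N / (2 * a) + 1) / p ^ 2 := by
        exact (div_le_div_iff_of_pos_right (pow_pos hp0 2)).mpr (by linarith)
end

section
/- Fix r > 0, ρ > 0, λ₁, λ₂ ∈ ℝ and α ∈ ℝ. Then there exist p₀ > 1 and K > 0 such that for every p ≥ p₀, f_p attains a global minimum on [0, π), and every point θ ∈ [0, π) at which f_p attains its global minimum satisfies |θ − π/2| ≤ K/p. (For large p the minimizing angle lies near π/2, i.e. near the direction orthogonal to the horizontal gradient.) -/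
open Real Set

lemma jordan_abs' {x : ℝ} (hx : |x| ≤ π / 2) : 2 / π * |x| ≤ |sin x| := by
  have h := Real.mul_le_sin (abs_nonneg x) hx
  have h2 : sin |x| ≤ |sin x| := by
    rcases abs_cases x with ⟨h1, _⟩ | ⟨h1, _⟩ <;> rw [h1]
    · exact le_abs_self _
    · rw [Real.sin_neg]; exact neg_le_abs _
  linarith

lemma aux_bound' {l a b : ℝ} (ha0 : 0 ≤ a) (ha1 : a ≤ 1) (hb0 : 0 ≤ b) (hb1 : b ≤ 1) :
    l * a - l * b ≤ |l| := by
  rcases abs_cases l with ⟨h1, h2⟩ | ⟨h1, h2⟩ <;> nlinarith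

set_option maxHeartbeats 1000000 in
/-- For large `p`, the function
`f_p θ = −(p−1) r⁻¹ ρ² sin²θ + λ₁ sin²(θ+α) + λ₂ cos²(θ+α)` attains a global
minimum on `[0, π)`, and every minimizer lies within `K/p` of `π/2`, i.e. near
the direction orthogonal to the horizontal gradient. -/
theorem minimizing_angle_near_pi_half (r ρ lam₁ lam₂ α : ℝ)
    (hr : 0 < r) (hρ : 0 < ρ)
    (f : ℝ → ℝ → ℝ)
    (hf : ∀ p θ, f p θ = -(p - 1) * r⁻¹ * ρ ^ 2 * sin θ ^ 2
        + lam₁ * sin (θ + α) ^ 2 + lam₂ * cos (θ + α) ^ 2) :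
    ∃ p₀ > (1 : ℝ), ∃ K > (0 : ℝ), ∀ p ≥ p₀,
      (∃ θ ∈ Ico (0 : ℝ) π, IsMinOn (f p) (Ico (0 : ℝ) π) θ) ∧
      ∀ θ ∈ Ico (0 : ℝ) π, IsMinOn (f p) (Ico (0 : ℝ) π) θ →
        |θ - π / 2| ≤ K / p := by
  have hπ : (0 : ℝ) < π := Real.pi_pos
  have hM0 : (0:ℝ) ≤ |lam₁| + |lam₂| := by positivity
  refine ⟨2 + 8 * (|lam₁| + |lam₂|) * r / ρ ^ 2,
    by have : (0:ℝ) ≤ 8 * (|lam₁| + |lam₂|) * r / ρ ^ 2 := by positivity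
       linarith,
    π * (|lam₁ - lam₂| + 1) * r / ρ ^ 2, by positivity, ?_⟩
  intro p hp
  have hq : (0:ℝ) ≤ 8 * (|lam₁| + |lam₂|) * r / ρ ^ 2 := by positivity
  have hp2 : 2 ≤ p := by linarith
  have hp0 : 0 < p := by linarith
  have hfg : f p = fun θ => -(p - 1) * r⁻¹ * ρ ^ 2 * sin θ ^ 2
      + lam₁ * sin (θ + α) ^ 2 + lam₂ * cos (θ + α) ^ 2 := funext (hf p)
  have hcont : Continuous (f p) := by rw [hfg]; fun_prop
  have hper : Function.Periodic (f p) π := by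
    intro x
    simp only [hf]
    rw [show x + π + α = (x + α) + π by ring, Real.sin_add_pi, Real.cos_add_pi,
      Real.sin_add_pi]
    ring
  -- existence of a minimizer on the compact interval
  obtain ⟨θ₀, hθ₀mem, hθ₀min⟩ := isCompact_Icc.exists_isMinOn
    (nonempty_Icc.2 hπ.le) hcont.continuousOn
  have hex : ∃ θ ∈ Ico (0:ℝ) π, IsMinOn (f p) (Ico (0:ℝ) π) θ := by
    rcases eq_or_lt_of_le hθ₀mem.2 with heq | hlt
    · have h0π : f p π = f p 0 := by have := hper 0; rwa [zero_add] at this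
      refine ⟨0, ⟨le_rfl, hπ⟩, isMinOn_iff.2 fun x hx => ?_⟩
      calc f p 0 = f p θ₀ := by rw [heq, h0π]
        _ ≤ f p x := isMinOn_iff.1 hθ₀min x (Ico_subset_Icc_self hx)
    · exact ⟨θ₀, ⟨hθ₀mem.1, hlt⟩, hθ₀min.on_subset Ico_subset_Icc_self⟩
  refine ⟨hex, ?_⟩
  intro θ hθ hmin
  -- a minimizer on [0, π) is a global minimizer by periodicity
  have hglob : ∀ x, f p θ ≤ f p x := by
    intro x
    have hmem := toIcoMod_mem_Ico hπ 0 x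
    rw [zero_add] at hmem
    have heq : f p (toIcoMod hπ 0 x) = f p x := by
      rw [← self_sub_toIcoDiv_zsmul hπ 0 x]
      exact hper.sub_zsmul_eq _
    calc f p θ ≤ f p (toIcoMod hπ 0 x) := isMinOn_iff.1 hmin _ hmem
      _ = f p x := heq
  -- critical point
  have hloc : IsLocalMin (f p) θ := Filter.Eventually.of_forall hglob
  have hd : HasDerivAt (f p)
      (-(p - 1) * r⁻¹ * ρ ^ 2 * (2 * sin θ ^ 1 * cos θ)
        + lam₁ * (2 * sin (θ + α) ^ 1 * (cos (θ + α) * 1))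
        + lam₂ * (2 * cos (θ + α) ^ 1 * (-sin (θ + α) * 1))) θ := by
    rw [hfg]
    exact ((((Real.hasDerivAt_sin θ).pow 2).const_mul _).add
        ((((hasDerivAt_id θ).add_const α).sin.pow 2).const_mul lam₁)).add
        ((((hasDerivAt_id θ).add_const α).cos.pow 2).const_mul lam₂)
  have hD0 : -(p - 1) * r⁻¹ * ρ ^ 2 * (2 * sin θ ^ 1 * cos θ)
        + lam₁ * (2 * sin (θ + α) ^ 1 * (cos (θ + α) * 1))
        + lam₂ * (2 * cos (θ + α) ^ 1 * (-sin (θ + α) * 1)) = 0 := by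
    rw [← hd.deriv]; exact hloc.deriv_eq_zero
  simp only [pow_one, mul_one] at hD0
  set δ : ℝ := θ - π / 2 with hδdef
  have hθeq : θ = δ + π / 2 := by rw [hδdef]; ring
  have hsin : sin θ = cos δ := by rw [hθeq, Real.sin_add_pi_div_two]
  have hcos : cos θ = -sin δ := by rw [hθeq, Real.cos_add_pi_div_two]
  -- energy comparison with θ = π/2
  have hE := hglob (π / 2)
  rw [hf p θ, hf p (π / 2), Real.sin_pi_div_two] at hE
  have hc_pos : 0 < (p - 1) * r⁻¹ * ρ ^ 2 := by
    have : (1:ℝ) ≤ p - 1 := by linarith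
    positivity
  have hcc : (p - 1) * r⁻¹ * ρ ^ 2 * cos θ ^ 2 ≤ |lam₁| + |lam₂| := by
    have h1 := aux_bound' (l := lam₁) (a := sin (π/2 + α) ^ 2) (b := sin (θ + α) ^ 2)
      (sq_nonneg _) (Real.sin_sq_le_one _) (sq_nonneg _) (Real.sin_sq_le_one _)
    have h2 := aux_bound' (l := lam₂) (a := cos (π/2 + α) ^ 2) (b := cos (θ + α) ^ 2)
      (sq_nonneg _) (Real.cos_sq_le_one _) (sq_nonneg _) (Real.cos_sq_le_one _)
    nlinarith [Real.sin_sq_add_cos_sq θ]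
  -- c ≥ ρ²/r + 8M
  have key : ρ ^ 2 / r + 8 * (|lam₁| + |lam₂|) ≤ (p - 1) * r⁻¹ * ρ ^ 2 := by
    have h1 : (1 : ℝ) + 8 * (|lam₁| + |lam₂|) * r / ρ ^ 2 ≤ p - 1 := by linarith
    have h2 := mul_le_mul_of_nonneg_right h1
      (le_of_lt (by positivity : (0:ℝ) < r⁻¹ * ρ ^ 2))
    calc ρ ^ 2 / r + 8 * (|lam₁| + |lam₂|)
        = (1 + 8 * (|lam₁| + |lam₂|) * r / ρ ^ 2) * (r⁻¹ * ρ ^ 2) := by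
          field_simp
      _ ≤ (p - 1) * (r⁻¹ * ρ ^ 2) := h2
      _ = (p - 1) * r⁻¹ * ρ ^ 2 := by ring
  -- sin δ is small
  have hsd : (p - 1) * r⁻¹ * ρ ^ 2 * sin δ ^ 2 ≤ |lam₁| + |lam₂| := by
    have hcs : cos θ ^ 2 = sin δ ^ 2 := by rw [hcos]; ring
    rw [← hcs]; exact hcc
  have hr8 : ρ ^ 2 / r > 0 := by positivity
  have hA : (p - 1) * r⁻¹ * ρ ^ 2 * (8 * sin δ ^ 2) ≤ (p - 1) * r⁻¹ * ρ ^ 2 * 1 := by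
    have e : (p - 1) * r⁻¹ * ρ ^ 2 * (8 * sin δ ^ 2)
        = 8 * ((p - 1) * r⁻¹ * ρ ^ 2 * sin δ ^ 2) := by ring
    rw [e, mul_one]; linarith
  have hsd2 : sin δ ^ 2 ≤ 1 / 8 := by
    have h8 := (mul_le_mul_iff_right₀ hc_pos).1 hA
    linarith
  have habs_sin : |sin δ| ≤ 1 / 2 := by
    nlinarith [sq_abs (sin δ), sq_nonneg (|sin δ| - 1 / 2)]
  have hδabs : |δ| ≤ π / 2 := abs_le.2 ⟨by simp only [hδdef]; linarith [hθ.1],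
    by simp only [hδdef]; linarith [hθ.2]⟩
  have hδ4 : |δ| ≤ π / 4 := by
    have hj := jordan_abs' hδabs
    have h2 : π * (2 / π * |δ|) = 2 * |δ| := by field_simp
    have h3 := mul_le_mul_of_nonneg_left (le_trans hj habs_sin) hπ.le
    rw [h2] at h3
    linarith
  -- derivative relation
  have hkey : (p - 1) * r⁻¹ * ρ ^ 2 * (2 * sin δ * cos δ)
      = -(lam₁ - lam₂) * (2 * sin (θ + α) * cos (θ + α)) := by
    rw [hsin, hcos] at hD0
    linear_combination hD0
  have h2δ : (p - 1) * r⁻¹ * ρ ^ 2 * |sin (2 * δ)| ≤ |lam₁ - lam₂| := by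
    rw [Real.sin_two_mul]
    calc (p - 1) * r⁻¹ * ρ ^ 2 * |2 * sin δ * cos δ|
        = |(p - 1) * r⁻¹ * ρ ^ 2| * |2 * sin δ * cos δ| := by
          rw [abs_of_pos hc_pos]
      _ = |(p - 1) * r⁻¹ * ρ ^ 2 * (2 * sin δ * cos δ)| := (abs_mul _ _).symm
      _ = |(-(lam₁ - lam₂)) * (2 * sin (θ + α) * cos (θ + α))| := by rw [hkey]
      _ = |lam₁ - lam₂| * |sin (2 * (θ + α))| := by
          rw [abs_mul, abs_neg, ← Real.sin_two_mul]
      _ ≤ |lam₁ - lam₂| * 1 :=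
          mul_le_mul_of_nonneg_left (Real.abs_sin_le_one _) (abs_nonneg _)
      _ = |lam₁ - lam₂| := mul_one _
  -- Jordan bound on 2δ
  have h2δabs : |2 * δ| ≤ π / 2 := by rw [abs_mul, abs_two]; linarith
  have hj2 := jordan_abs' h2δabs
  rw [abs_mul, abs_two] at hj2
  -- conclude
  rw [le_div_iff₀ hp0]
  have hstep : (p - 1) * r⁻¹ * ρ ^ 2 * (2 / π * (2 * |δ|)) ≤ |lam₁ - lam₂| :=
    le_trans (mul_le_mul_of_nonneg_left hj2 hc_pos.le) h2δ
  -- clear denominators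
  rw [le_div_iff₀ (by positivity : (0:ℝ) < ρ ^ 2)]
  have hclear : (p - 1) * ρ ^ 2 * (4 * |δ|) ≤ |lam₁ - lam₂| * (r * π) := by
    have h := mul_le_mul_of_nonneg_left hstep (le_of_lt (mul_pos hr hπ))
    have hrr : r * r⁻¹ = 1 := mul_inv_cancel₀ hr.ne'
    have hππ : π * π⁻¹ = 1 := mul_inv_cancel₀ hπ.ne'
    have heq2 : r * π * ((p - 1) * r⁻¹ * ρ ^ 2 * (2 / π * (2 * |δ|)))
        = (p - 1) * ρ ^ 2 * (4 * |δ|) := by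
      linear_combination ((p - 1) * ρ ^ 2 * 4 * |δ| * (π * π⁻¹)) * hrr
        + ((p - 1) * ρ ^ 2 * 4 * |δ|) * hππ
    rw [heq2] at h
    linarith [h]
  have h1 : 0 ≤ (p - 2) * (|δ| * ρ ^ 2) :=
    mul_nonneg (by linarith) (mul_nonneg (abs_nonneg δ) (sq_nonneg ρ))
  have h2' : 0 ≤ |lam₁ - lam₂| * (r * π) :=
    mul_nonneg (abs_nonneg _) (mul_pos hr hπ).le
  linarith [mul_pos hπ hr]
end
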